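/- Let Y be a nonnegative random variable and M > 0 a constant such that Y ≤ M·X_{(n)} almost surely, where X_{(n)} = max(X_1,…,X_n) of i.i.d. nonnegative random variables with P(X_i > x) ≤ K·x^{−α}. Then for any ε > 0, P(Y > y and Σ_{i=1}^n X_i − X_{(n)} ≥ ε·X_{(n)}) = O(y^{−2α}) as y → ∞. -/

import Mathlib

open MeasureTheory ProbabilityTheory

/-- if Y ≤ M·X_{(n)} a.s. where X_{(n)} is the maximum of i.i.d. nonnegative
random variables with tail bound P(X_i > x) ≤ K x^{-α}, then for any ε > 0,
P(Y > y, Σ X_i − X_{(n)} ≥ ε X_{(n)}) = O(y^{-2α}) as y → ∞. -/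
theorem catastrophe_principle_bound
    {Ω : Type*} [MeasurableSpace Ω] (μ : Measure Ω) [IsProbabilityMeasure μ]
    (n : ℕ) (hn : 0 < n) (X : Fin n → Ω → ℝ) (K α : ℝ) (hK : 0 < K) (hα : 0 < α)
    (hmeas : ∀ i, Measurable (X i))
    (hnonneg : ∀ i ω, 0 ≤ X i ω)
    (hindep : iIndepFun X μ)
    (hident : ∀ i j, IdentDistrib (X i) (X j) μ μ)
    (htail : ∀ i, ∀ x : ℝ, 0 < x → μ {ω | X i ω > x} ≤ ENNReal.ofReal (K * x ^ (-α)))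
    (Y : Ω → ℝ) (hYmeas : Measurable Y) (hYnonneg : ∀ ω, 0 ≤ Y ω)
    (M : ℝ) (hM : 0 < M)
    (hbound : ∀ ω, Y ω ≤ M * ⨆ i, X i ω)
    (ε : ℝ) (hε : 0 < ε) :
    ∃ C y₀ : ℝ, 0 ≤ C ∧ ∀ y ≥ y₀,
      μ {ω | Y ω > y ∧ (∑ i, X i ω) - (⨆ i, X i ω) ≥ ε * ⨆ i, X i ω} ≤
        ENNReal.ofReal (C * y ^ (-(2 * α))) := by
  rcases Nat.lt_or_ge n 2 with h2 | h2
  · -- n = 1 case: the event is empty for y ≥ 1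
    interval_cases n
    refine ⟨0, 1, le_refl 0, fun y hy => ?_⟩
    have hempty : {ω | Y ω > y ∧ (∑ i, X i ω) - (⨆ i, X i ω) ≥ ε * ⨆ i, X i ω} = ∅ := by
      ext ω
      simp only [Set.mem_setOf_eq, Set.mem_empty_iff_false, iff_false, not_and]
      intro hY hsum
      have hsup : (⨆ i, X i ω) = X 0 ω := ciSup_unique
      have hsum' : (∑ i : Fin 1, X i ω) = X 0 ω := by simp
      rw [hsup, hsum'] at hsum
      have h1 : 0 < X 0 ω := by
        have hb := hbound ω
        rw [hsup] at hb
        nlinarith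
      nlinarith
    rw [hempty]
    simp
  · -- n ≥ 2
    set c : ℝ := ε / (M * ((n : ℝ) - 1)) with hc_def
    have hn1 : (0:ℝ) < (n:ℝ) - 1 := by
      have : (2:ℝ) ≤ (n : ℝ) := by exact_mod_cast h2
      linarith
    have hc : 0 < c := div_pos hε (by positivity)
    refine ⟨(n:ℝ)^2 * (K * (M⁻¹) ^ (-α)) * (K * c ^ (-α)), 1, by positivity, fun y hy => ?_⟩
    have hy0 : (0:ℝ) < y := lt_of_lt_of_le one_pos hy
    have hincl : {ω | Y ω > y ∧ (∑ i, X i ω) - (⨆ i, X i ω) ≥ ε * ⨆ i, X i ω}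
        ⊆ ⋃ p : Fin n × Fin n, ⋃ _ : p.1 ≠ p.2,
            (X p.1 ⁻¹' Set.Ioi (y / M) ∩ X p.2 ⁻¹' Set.Ioi (c * y)) := by
      rintro ω ⟨hY, hsum⟩
      haveI : Nonempty (Fin n) := ⟨⟨0, hn⟩⟩
      have hbdd : BddAbove (Set.range fun i => X i ω) := (Set.finite_range _).bddAbove
      obtain ⟨i, hi⟩ := Finite.exists_max fun i => X i ω
      have hsup : (⨆ j, X j ω) = X i ω := le_antisymm (ciSup_le hi) (le_ciSup hbdd i)
      have hXi : y / M < X i ω := by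
        have hb := hbound ω
        rw [hsup] at hb
        rw [div_lt_iff₀ hM]
        nlinarith
      have hsum2 : ∑ j ∈ Finset.univ.erase i, X j ω = (∑ j, X j ω) - X i ω := by
        rw [eq_sub_iff_add_eq, Finset.sum_erase_add _ _ (Finset.mem_univ i)]
      have hlt : ∑ _j ∈ Finset.univ.erase i, (c * y) < ∑ j ∈ Finset.univ.erase i, X j ω := by
        rw [hsum2, Finset.sum_const, Finset.card_erase_of_mem (Finset.mem_univ i),
          Finset.card_univ, Fintype.card_fin]
        rw [hsup] at hsum
        have hcast : ((n - 1 : ℕ) : ℝ) = (n : ℝ) - 1 := by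
          have h1n : 1 ≤ n := hn
          push_cast [h1n]
          ring
        rw [nsmul_eq_mul, hcast]
        have hcy : ((n:ℝ) - 1) * (c * y) = ε * (y / M) := by
          rw [hc_def]
          field_simp
        rw [hcy]
        have hlt2 : ε * (y / M) < ε * X i ω := mul_lt_mul_of_pos_left hXi hε
        nlinarith
      obtain ⟨j, hj, hj2⟩ := Finset.exists_lt_of_sum_lt hlt
      have hij : i ≠ j := fun h => (Finset.mem_erase.1 hj).1 h.symm
      exact Set.mem_iUnion.2 ⟨(i, j), Set.mem_iUnion.2 ⟨hij, hXi, hj2⟩⟩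
    have hterm : ∀ p : Fin n × Fin n,
        μ (⋃ _ : p.1 ≠ p.2, (X p.1 ⁻¹' Set.Ioi (y / M) ∩ X p.2 ⁻¹' Set.Ioi (c * y)))
          ≤ ENNReal.ofReal ((K * (y / M) ^ (-α)) * (K * (c * y) ^ (-α))) := by
      intro p
      by_cases hp : p.1 ≠ p.2
      · have hrw : (⋃ _ : p.1 ≠ p.2, (X p.1 ⁻¹' Set.Ioi (y / M) ∩ X p.2 ⁻¹' Set.Ioi (c * y)))
            = X p.1 ⁻¹' Set.Ioi (y / M) ∩ X p.2 ⁻¹' Set.Ioi (c * y) := by simp [hp]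
        rw [hrw]
        have hind := hindep.indepFun hp
        have hfac := hind.measure_inter_preimage_eq_mul (Set.Ioi (y / M)) (Set.Ioi (c * y))
          measurableSet_Ioi measurableSet_Ioi
        rw [hfac, ENNReal.ofReal_mul (by positivity)]
        have hA : X p.1 ⁻¹' Set.Ioi (y / M) = {ω | X p.1 ω > y / M} := rfl
        have hB : X p.2 ⁻¹' Set.Ioi (c * y) = {ω | X p.2 ω > c * y} := rfl
        rw [hA, hB]
        exact mul_le_mul' (htail p.1 _ (by positivity)) (htail p.2 _ (by positivity))
      · simp [hp]
    calc μ {ω | Y ω > y ∧ (∑ i, X i ω) - (⨆ i, X i ω) ≥ ε * ⨆ i, X i ω}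
        ≤ μ (⋃ p : Fin n × Fin n, ⋃ _ : p.1 ≠ p.2,
            (X p.1 ⁻¹' Set.Ioi (y / M) ∩ X p.2 ⁻¹' Set.Ioi (c * y))) := measure_mono hincl
      _ ≤ ∑ p : Fin n × Fin n, μ (⋃ _ : p.1 ≠ p.2,
            (X p.1 ⁻¹' Set.Ioi (y / M) ∩ X p.2 ⁻¹' Set.Ioi (c * y))) :=
          measure_iUnion_fintype_le _ _
      _ ≤ ∑ _p : Fin n × Fin n,
            ENNReal.ofReal ((K * (y / M) ^ (-α)) * (K * (c * y) ^ (-α))) :=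
          Finset.sum_le_sum (fun p _ => hterm p)
      _ ≤ ENNReal.ofReal ((n:ℝ)^2 * (K * (M⁻¹) ^ (-α)) * (K * c ^ (-α)) * y ^ (-(2 * α))) := by
          rw [Finset.sum_const, Finset.card_univ, Fintype.card_prod, Fintype.card_fin,
            nsmul_eq_mul]
          rw [← ENNReal.ofReal_natCast (n * n), ← ENNReal.ofReal_mul (by positivity)]
          apply ENNReal.ofReal_le_ofReal
          have h1 : (y / M) ^ (-α) = y ^ (-α) * (M⁻¹) ^ (-α) := by
            rw [div_eq_mul_inv, Real.mul_rpow (le_of_lt hy0) (by positivity)]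
          have h2 : (c * y) ^ (-α) = c ^ (-α) * y ^ (-α) := by
            rw [Real.mul_rpow (le_of_lt hc) (le_of_lt hy0)]
          have h3 : y ^ (-(2 * α)) = y ^ (-α) * y ^ (-α) := by
            rw [← Real.rpow_add hy0]
            ring_nf
          rw [h1, h2, h3]
          push_cast
          ring_nf
          exact le_refl _
      _ = ENNReal.ofReal ((n:ℝ)^2 * (K * (M⁻¹) ^ (-α)) * (K * c ^ (-α)) * y ^ (-(2 * α))) := rfl
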